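/- Let H be a Hopf algebra over a field k and let W_H be the subalgebra of S(t_H)_Θ generated by the elements p_x = t_{x_1} t_{S(x_2)} and q_{x,y} = t_{x_1} t_{y_1} t_{S(x_2 y_2)} for all x, y ∈ H. Then W_H is a left coideal subalgebra of S(t_H)_Θ, i.e., Δ(W_H) ⊆ S(t_H)_Θ ⊗ W_H; explicitly, Δ(p_x) = t_{x_1} t_{S(x_3)} ⊗ p_{x_2} and Δ(q_{x,y}) = t_{x_1} t_{y_1} t_{S(x_3 y_3)} ⊗ q_{x_2, y_2}. -/

import Mathlib

open TensorProduct

noncomputable section AuxHopfDev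

noncomputable section ConvStuff

variable {k : Type*} [CommSemiring k]
variable {C : Type*} [AddCommMonoid C] [Module k C] [Coalgebra k C]
variable {B : Type*} [Semiring B] [Algebra k B]
variable {B' : Type*} [Semiring B'] [Algebra k B']

/-- Convolution product of linear maps from a coalgebra to an algebra. -/
def conv (f g : C →ₗ[k] B) : C →ₗ[k] B :=
  LinearMap.mul' k B ∘ₗ TensorProduct.map f g ∘ₗ Coalgebra.comul

lemma conv_repr {ι : Type*} {c : C} (r : Coalgebra.Repr k c ι) (f g : C →ₗ[k] B) :
    conv f g c = ∑ i ∈ r.index, f (r.left i) * g (r.right i) := by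
  simp only [conv, LinearMap.comp_apply, ← r.eq, map_sum, TensorProduct.map_tmul,
    LinearMap.mul'_apply]

lemma repr_assoc {V : Type*} [AddCommMonoid V] [Module k V]
    {ι κ Λ : Type*}
    (T : C ⊗[k] (C ⊗[k] C) →ₗ[k] V) {c : C} (r : Coalgebra.Repr k c ι)
    (a₁ : (i : ι) → Coalgebra.Repr k (r.left i) κ)
    (a₂ : (i : ι) → Coalgebra.Repr k (r.right i) Λ) :
    ∑ i ∈ r.index, ∑ j ∈ (a₁ i).index,
      T ((a₁ i).left j ⊗ₜ[k] ((a₁ i).right j ⊗ₜ[k] r.right i)) =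
    ∑ i ∈ r.index, ∑ j ∈ (a₂ i).index,
      T (r.left i ⊗ₜ[k] ((a₂ i).left j ⊗ₜ[k] (a₂ i).right j)) := by
  have h := Coalgebra.sum_tmul_tmul_eq r a₁ a₂
  have := congrArg T h
  simpa only [map_sum] using this

lemma conv_assoc (f g h : C →ₗ[k] B) : conv (conv f g) h = conv f (conv g h) := by
  ext c
  set r := Coalgebra.Repr.arbitrary k c with hr
  rw [conv_repr r, conv_repr r]
  have L : ∀ i ∈ r.index, conv f g (r.left i) * h (r.right i) =
      ∑ j ∈ (Coalgebra.Repr.arbitrary k (r.left i)).index,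
        (LinearMap.mul' k B ∘ₗ TensorProduct.map f (LinearMap.mul' k B ∘ₗ TensorProduct.map g h))
          ((Coalgebra.Repr.arbitrary k (r.left i)).left j ⊗ₜ[k]
            ((Coalgebra.Repr.arbitrary k (r.left i)).right j ⊗ₜ[k] r.right i)) := by
    intro i _
    rw [conv_repr (Coalgebra.Repr.arbitrary k (r.left i)), Finset.sum_mul]
    simp [mul_assoc]
  have R : ∀ i ∈ r.index, f (r.left i) * conv g h (r.right i) =
      ∑ j ∈ (Coalgebra.Repr.arbitrary k (r.right i)).index,
        (LinearMap.mul' k B ∘ₗ TensorProduct.map f (LinearMap.mul' k B ∘ₗ TensorProduct.map g h))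
          (r.left i ⊗ₜ[k]
            ((Coalgebra.Repr.arbitrary k (r.right i)).left j ⊗ₜ[k]
              (Coalgebra.Repr.arbitrary k (r.right i)).right j)) := by
    intro i _
    rw [conv_repr (Coalgebra.Repr.arbitrary k (r.right i)), Finset.mul_sum]
    simp
  rw [Finset.sum_congr rfl L, Finset.sum_congr rfl R]
  exact repr_assoc _ r _ _

/-- The convolution unit `η ∘ ε`. -/
def convUnit : C →ₗ[k] B := Algebra.linearMap k B ∘ₗ Coalgebra.counit

lemma convUnit_def (c : C) :
    (convUnit : C →ₗ[k] B) c = algebraMap k B (Coalgebra.counit (R := k) c) := rfl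

lemma conv_unit_right (f : C →ₗ[k] B) : conv f convUnit = f := by
  ext c
  set r := Coalgebra.Repr.arbitrary k c
  rw [conv_repr r]
  have : ∀ i ∈ r.index, f (r.left i) * (convUnit (k := k) (B := B)) (r.right i) =
      f (Coalgebra.counit (R := k) (r.right i) • r.left i) := by
    intro i _
    rw [map_smul]
    simp [convUnit_def, Algebra.smul_def, ← Algebra.commutes]
  rw [Finset.sum_congr rfl this, ← map_sum]
  congr 1
  have h := Coalgebra.sum_tmul_counit_eq r
  have := congrArg (TensorProduct.rid k C) h
  simpa only [map_sum, TensorProduct.rid_tmul, one_smul] using this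

lemma conv_unit_left (f : C →ₗ[k] B) : conv convUnit f = f := by
  ext c
  set r := Coalgebra.Repr.arbitrary k c
  rw [conv_repr r]
  have : ∀ i ∈ r.index, (convUnit (k := k) (B := B)) (r.left i) * f (r.right i) =
      f (Coalgebra.counit (R := k) (r.left i) • r.right i) := by
    intro i _
    rw [map_smul]
    simp [convUnit_def, Algebra.smul_def]
  rw [Finset.sum_congr rfl this, ← map_sum]
  congr 1
  have h := Coalgebra.sum_counit_tmul_eq r
  have := congrArg (TensorProduct.lid k C) h
  simpa only [map_sum, TensorProduct.lid_tmul, one_smul] using this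

lemma algHom_comp_conv (φ : B →ₐ[k] B') (f g : C →ₗ[k] B) :
    φ.toLinearMap ∘ₗ conv f g = conv (φ.toLinearMap ∘ₗ f) (φ.toLinearMap ∘ₗ g) := by
  ext c
  set r := Coalgebra.Repr.arbitrary k c
  simp only [LinearMap.comp_apply, conv_repr r, map_sum, AlgHom.toLinearMap_apply, map_mul]

lemma algHom_comp_convUnit (φ : B →ₐ[k] B') :
    φ.toLinearMap ∘ₗ (convUnit : C →ₗ[k] B) = convUnit := by
  ext c
  simp [convUnit_def]

end ConvStuff

noncomputable section AntiComul

variable {k : Type*} [CommSemiring k]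

section incl
variable {D : Type*} [Semiring D] [Algebra k D]

lemma mul'_comp_includeLR :
    (LinearMap.mul' k (D ⊗[k] D)) ∘ₗ
      TensorProduct.map (Algebra.TensorProduct.includeLeft : D →ₐ[k] D ⊗[k] D).toLinearMap
        (Algebra.TensorProduct.includeRight : D →ₐ[k] D ⊗[k] D).toLinearMap
    = LinearMap.id := by
  apply TensorProduct.ext'
  intro a b
  simp [Algebra.TensorProduct.tmul_mul_tmul]

lemma mul'_comp_includeRL :
    (LinearMap.mul' k (D ⊗[k] D)) ∘ₗ
      TensorProduct.map (Algebra.TensorProduct.includeRight : D →ₐ[k] D ⊗[k] D).toLinearMap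
        (Algebra.TensorProduct.includeLeft : D →ₐ[k] D ⊗[k] D).toLinearMap
    = (TensorProduct.comm k D D).toLinearMap := by
  apply TensorProduct.ext'
  intro a b
  simp [Algebra.TensorProduct.tmul_mul_tmul]

end incl

section hopf
variable {H : Type*} [Semiring H] [HopfAlgebra k H]

local notation "S" => (HopfAlgebra.antipode (R := k) (A := H))
local notation "Δ" => (Coalgebra.comul (R := k) (A := H))

lemma conv_id_antipode : conv (LinearMap.id : H →ₗ[k] H) S = convUnit :=
  HopfAlgebra.mul_antipode_lTensor_comul

lemma conv_antipode_id : conv (S : H →ₗ[k] H) LinearMap.id = convUnit :=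
  HopfAlgebra.mul_antipode_rTensor_comul

lemma comul_comp_antipode :
    (Δ ∘ₗ S : H →ₗ[k] H ⊗[k] H) =
      (TensorProduct.comm k H H).toLinearMap ∘ₗ TensorProduct.map S S ∘ₗ Δ := by
  set i1 := (Algebra.TensorProduct.includeLeft : H →ₐ[k] H ⊗[k] H) with hi1
  set i2 := (Algebra.TensorProduct.includeRight : H →ₐ[k] H ⊗[k] H) with hi2
  have hφ : (Bialgebra.comulAlgHom k H).toLinearMap = (Δ : H →ₗ[k] H ⊗[k] H) := rfl
  have e1 : (Δ : H →ₗ[k] H ⊗[k] H) = conv i1.toLinearMap i2.toLinearMap := by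
    unfold conv
    rw [← LinearMap.comp_assoc, mul'_comp_includeLR, LinearMap.id_comp]
  have key : (LinearMap.mul' k (H ⊗[k] H)) ∘ₗ
      TensorProduct.map (i2.toLinearMap ∘ₗ S) (i1.toLinearMap ∘ₗ S)
      = (TensorProduct.comm k H H).toLinearMap ∘ₗ TensorProduct.map S S := by
    apply TensorProduct.ext'
    intro a b
    simp [Algebra.TensorProduct.tmul_mul_tmul, hi1, hi2]
  have e2 : ((TensorProduct.comm k H H).toLinearMap ∘ₗ TensorProduct.map S S ∘ₗ Δ
        : H →ₗ[k] H ⊗[k] H) =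
      conv (i2.toLinearMap ∘ₗ S) (i1.toLinearMap ∘ₗ S) := by
    unfold conv
    rw [← LinearMap.comp_assoc, ← key, LinearMap.comp_assoc]
  have h1 : conv (Δ : H →ₗ[k] H ⊗[k] H) (Δ ∘ₗ S) = convUnit := by
    have h := algHom_comp_conv (Bialgebra.comulAlgHom k H) (LinearMap.id : H →ₗ[k] H) S
    rw [conv_id_antipode, algHom_comp_convUnit, hφ, LinearMap.comp_id] at h
    exact h.symm
  have h2 : conv ((TensorProduct.comm k H H).toLinearMap ∘ₗ TensorProduct.map S S ∘ₗ Δ)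
      (Δ : H →ₗ[k] H ⊗[k] H) = convUnit := by
    rw [e2, e1, conv_assoc, ← conv_assoc (i1.toLinearMap ∘ₗ S) i1.toLinearMap i2.toLinearMap]
    have ha : conv (i1.toLinearMap ∘ₗ S) i1.toLinearMap = convUnit := by
      have h := algHom_comp_conv i1 (S : H →ₗ[k] H) LinearMap.id
      rw [conv_antipode_id, algHom_comp_convUnit, LinearMap.comp_id] at h
      exact h.symm
    have hb : conv (i2.toLinearMap ∘ₗ S) i2.toLinearMap = convUnit := by
      have h := algHom_comp_conv i2 (S : H →ₗ[k] H) LinearMap.id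
      rw [conv_antipode_id, algHom_comp_convUnit, LinearMap.comp_id] at h
      exact h.symm
    rw [ha, conv_unit_left, hb]
  have main : ((TensorProduct.comm k H H).toLinearMap ∘ₗ TensorProduct.map S S ∘ₗ Δ
        : H →ₗ[k] H ⊗[k] H) = Δ ∘ₗ S := by
    calc ((TensorProduct.comm k H H).toLinearMap ∘ₗ TensorProduct.map S S ∘ₗ Δ
          : H →ₗ[k] H ⊗[k] H)
        = conv ((TensorProduct.comm k H H).toLinearMap ∘ₗ TensorProduct.map S S ∘ₗ Δ)
            convUnit := (conv_unit_right _).symm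
      _ = conv ((TensorProduct.comm k H H).toLinearMap ∘ₗ TensorProduct.map S S ∘ₗ Δ)
            (conv (Δ : H →ₗ[k] H ⊗[k] H) (Δ ∘ₗ S)) := by rw [h1]
      _ = conv (conv ((TensorProduct.comm k H H).toLinearMap ∘ₗ TensorProduct.map S S ∘ₗ Δ)
            (Δ : H →ₗ[k] H ⊗[k] H)) (Δ ∘ₗ S) := (conv_assoc _ _ _).symm
      _ = conv convUnit (Δ ∘ₗ S) := by rw [h2]
      _ = Δ ∘ₗ S := conv_unit_left _
  exact main.symm

lemma comul_antipode_apply (z : H) :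
    Coalgebra.comul (R := k) (HopfAlgebra.antipode (R := k) z) =
      (TensorProduct.comm k H H) (TensorProduct.map S S (Coalgebra.comul (R := k) z)) :=
  congrFun (congrArg DFunLike.coe comul_comp_antipode) z

end hopf
end AntiComul

noncomputable section TensorCoalg

variable {k : Type*} [CommSemiring k]

lemma ttt_naturality {A₁ B₁ C₁ D₁ A₂ B₂ C₂ D₂ : Type*}
    [AddCommMonoid A₁] [AddCommMonoid B₁] [AddCommMonoid C₁] [AddCommMonoid D₁]
    [AddCommMonoid A₂] [AddCommMonoid B₂] [AddCommMonoid C₂] [AddCommMonoid D₂]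
    [Module k A₁] [Module k B₁] [Module k C₁] [Module k D₁]
    [Module k A₂] [Module k B₂] [Module k C₂] [Module k D₂]
    (f₁ : A₁ →ₗ[k] A₂) (f₂ : B₁ →ₗ[k] B₂) (f₃ : C₁ →ₗ[k] C₂) (f₄ : D₁ →ₗ[k] D₂) :
    TensorProduct.map (TensorProduct.map f₁ f₃) (TensorProduct.map f₂ f₄) ∘ₗ
      (tensorTensorTensorComm k A₁ B₁ C₁ D₁).toLinearMap
    = (tensorTensorTensorComm k A₂ B₂ C₂ D₂).toLinearMap ∘ₗ
      TensorProduct.map (TensorProduct.map f₁ f₂) (TensorProduct.map f₃ f₄) := by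
  ext a b c d
  simp [tensorTensorTensorComm_tmul]

lemma ttt_nat_apply {A₁ B₁ C₁ D₁ A₂ B₂ C₂ D₂ : Type*}
    [AddCommMonoid A₁] [AddCommMonoid B₁] [AddCommMonoid C₁] [AddCommMonoid D₁]
    [AddCommMonoid A₂] [AddCommMonoid B₂] [AddCommMonoid C₂] [AddCommMonoid D₂]
    [Module k A₁] [Module k B₁] [Module k C₁] [Module k D₁]
    [Module k A₂] [Module k B₂] [Module k C₂] [Module k D₂]
    (f₁ : A₁ →ₗ[k] A₂) (f₂ : B₁ →ₗ[k] B₂) (f₃ : C₁ →ₗ[k] C₂) (f₄ : D₁ →ₗ[k] D₂)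
    (z : (A₁ ⊗[k] B₁) ⊗[k] (C₁ ⊗[k] D₁)) :
    TensorProduct.map (TensorProduct.map f₁ f₃) (TensorProduct.map f₂ f₄)
      (tensorTensorTensorComm k A₁ B₁ C₁ D₁ z)
    = tensorTensorTensorComm k A₂ B₂ C₂ D₂
        (TensorProduct.map (TensorProduct.map f₁ f₂) (TensorProduct.map f₃ f₄) z) :=
  congrFun (congrArg DFunLike.coe (ttt_naturality f₁ f₂ f₃ f₄)) z

variable {M N : Type*} [AddCommMonoid M] [AddCommMonoid N] [Module k M] [Module k N]
  [Coalgebra k M] [Coalgebra k N]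

omit [Coalgebra k M] [Coalgebra k N] in
lemma str_coassoc :
    (TensorProduct.assoc k (M ⊗[k] N) (M ⊗[k] N) (M ⊗[k] N)).toLinearMap ∘ₗ
      TensorProduct.map (tensorTensorTensorComm k M M N N).toLinearMap LinearMap.id ∘ₗ
      (tensorTensorTensorComm k (M ⊗[k] M) M (N ⊗[k] N) N).toLinearMap
    = TensorProduct.map LinearMap.id (tensorTensorTensorComm k M M N N).toLinearMap ∘ₗ
      (tensorTensorTensorComm k M (M ⊗[k] M) N (N ⊗[k] N)).toLinearMap ∘ₗ
      TensorProduct.map (TensorProduct.assoc k M M M).toLinearMap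
        (TensorProduct.assoc k N N N).toLinearMap := by
  ext a b c d e f
  simp [tensorTensorTensorComm_tmul]

instance tensorCoalgebra : Coalgebra k (M ⊗[k] N) :=
  { (inferInstance : CoalgebraStruct k (M ⊗[k] N)) with
    coassoc := by
      apply TensorProduct.ext'
      intro x y
      have hsplit : ∀ (z : (M ⊗[k] N) ⊗[k] (M ⊗[k] N)),
          LinearMap.rTensor (M ⊗[k] N) (CoalgebraStruct.comul (R := k) (A := M ⊗[k] N)) z
          = TensorProduct.map (tensorTensorTensorComm k M M N N).toLinearMap LinearMap.id
              (TensorProduct.map (TensorProduct.map Coalgebra.comul Coalgebra.comul)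
                LinearMap.id z) := by
        intro z
        have : LinearMap.rTensor (M ⊗[k] N) (CoalgebraStruct.comul (R := k) (A := M ⊗[k] N))
            = TensorProduct.map (tensorTensorTensorComm k M M N N).toLinearMap LinearMap.id ∘ₗ
              TensorProduct.map (TensorProduct.map Coalgebra.comul Coalgebra.comul)
                LinearMap.id := by
          rw [← TensorProduct.map_comp, LinearMap.id_comp]
          rfl
        rw [this]; rfl
      have hsplit' : ∀ (z : (M ⊗[k] N) ⊗[k] (M ⊗[k] N)),
          LinearMap.lTensor (M ⊗[k] N) (CoalgebraStruct.comul (R := k) (A := M ⊗[k] N)) z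
          = TensorProduct.map LinearMap.id (tensorTensorTensorComm k M M N N).toLinearMap
              (TensorProduct.map LinearMap.id
                (TensorProduct.map Coalgebra.comul Coalgebra.comul) z) := by
        intro z
        have : LinearMap.lTensor (M ⊗[k] N) (CoalgebraStruct.comul (R := k) (A := M ⊗[k] N))
            = TensorProduct.map LinearMap.id (tensorTensorTensorComm k M M N N).toLinearMap ∘ₗ
              TensorProduct.map LinearMap.id
                (TensorProduct.map Coalgebra.comul Coalgebra.comul) := by
          rw [← TensorProduct.map_comp, LinearMap.id_comp]
          rfl
        rw [this]; rfl
      simp only [LinearMap.comp_apply]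
      have hDxy : (CoalgebraStruct.comul (R := k) (x ⊗ₜ[k] y)) =
          (tensorTensorTensorComm k M M N N)
            ((Coalgebra.comul (R := k) x) ⊗ₜ[k] (Coalgebra.comul (R := k) y)) := rfl
      rw [hDxy, hsplit, hsplit']
      have e1 : TensorProduct.map (TensorProduct.map Coalgebra.comul Coalgebra.comul)
            LinearMap.id
            ((tensorTensorTensorComm k M M N N)
              ((Coalgebra.comul (R := k) x) ⊗ₜ[k] (Coalgebra.comul (R := k) y)))
          = (tensorTensorTensorComm k (M ⊗[k] M) M (N ⊗[k] N) N)
              ((LinearMap.rTensor M (Coalgebra.comul (R := k) (A := M))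
                  (Coalgebra.comul (R := k) x)) ⊗ₜ[k]
               (LinearMap.rTensor N (Coalgebra.comul (R := k) (A := N))
                  (Coalgebra.comul (R := k) y))) := by
        have := ttt_nat_apply (k := k) (Coalgebra.comul (R := k) (A := M)) LinearMap.id
          (Coalgebra.comul (R := k) (A := N)) LinearMap.id
          ((Coalgebra.comul (R := k) x) ⊗ₜ[k] (Coalgebra.comul (R := k) y))
        simpa [TensorProduct.map_id, LinearMap.rTensor] using this
      have e2 : TensorProduct.map LinearMap.id
            (TensorProduct.map Coalgebra.comul Coalgebra.comul)
            ((tensorTensorTensorComm k M M N N)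
              ((Coalgebra.comul (R := k) x) ⊗ₜ[k] (Coalgebra.comul (R := k) y)))
          = (tensorTensorTensorComm k M (M ⊗[k] M) N (N ⊗[k] N))
              ((LinearMap.lTensor M (Coalgebra.comul (R := k) (A := M))
                  (Coalgebra.comul (R := k) x)) ⊗ₜ[k]
               (LinearMap.lTensor N (Coalgebra.comul (R := k) (A := N))
                  (Coalgebra.comul (R := k) y))) := by
        have := ttt_nat_apply (k := k) (LinearMap.id : M →ₗ[k] M)
          (Coalgebra.comul (R := k) (A := M)) (LinearMap.id : N →ₗ[k] N)
          (Coalgebra.comul (R := k) (A := N))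
          ((Coalgebra.comul (R := k) x) ⊗ₜ[k] (Coalgebra.comul (R := k) y))
        simpa [TensorProduct.map_id, LinearMap.lTensor] using this
      rw [e1, e2]
      have e3 := congrFun (congrArg DFunLike.coe (str_coassoc (k := k) (M := M) (N := N)))
        ((LinearMap.rTensor M (Coalgebra.comul (R := k) (A := M))
            (Coalgebra.comul (R := k) x)) ⊗ₜ[k]
         (LinearMap.rTensor N (Coalgebra.comul (R := k) (A := N))
            (Coalgebra.comul (R := k) y)))
      simp only [LinearMap.comp_apply, TensorProduct.map_tmul, LinearMap.coe_coe, LinearEquiv.coe_coe] at e3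
      rw [Coalgebra.coassoc_apply, Coalgebra.coassoc_apply] at e3
      exact e3
    rTensor_counit_comp_comul := by
      apply TensorProduct.ext'
      intro x y
      simp only [LinearMap.comp_apply]
      have hDxy : (CoalgebraStruct.comul (R := k) (x ⊗ₜ[k] y)) =
          (tensorTensorTensorComm k M M N N)
            ((Coalgebra.comul (R := k) x) ⊗ₜ[k] (Coalgebra.comul (R := k) y)) := rfl
      have hsplit : ∀ (z : (M ⊗[k] N) ⊗[k] (M ⊗[k] N)),
          LinearMap.rTensor (M ⊗[k] N) (CoalgebraStruct.counit (R := k) (A := M ⊗[k] N)) z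
          = TensorProduct.map (LinearMap.mul' k k) LinearMap.id
              (TensorProduct.map (TensorProduct.map Coalgebra.counit Coalgebra.counit)
                LinearMap.id z) := by
        intro z
        have : LinearMap.rTensor (M ⊗[k] N) (CoalgebraStruct.counit (R := k) (A := M ⊗[k] N))
            = TensorProduct.map (LinearMap.mul' k k) LinearMap.id ∘ₗ
              TensorProduct.map (TensorProduct.map Coalgebra.counit Coalgebra.counit)
                LinearMap.id := by
          rw [← TensorProduct.map_comp, LinearMap.id_comp]
          congr 1
          apply TensorProduct.ext'
          intro a b
          simp [mul_comm]
        rw [this]; rfl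
      rw [hDxy, hsplit]
      have e1 : TensorProduct.map (TensorProduct.map Coalgebra.counit Coalgebra.counit)
            LinearMap.id
            ((tensorTensorTensorComm k M M N N)
              ((Coalgebra.comul (R := k) x) ⊗ₜ[k] (Coalgebra.comul (R := k) y)))
          = (tensorTensorTensorComm k k M k N)
              ((LinearMap.rTensor M (Coalgebra.counit (R := k) (A := M))
                  (Coalgebra.comul (R := k) x)) ⊗ₜ[k]
               (LinearMap.rTensor N (Coalgebra.counit (R := k) (A := N))
                  (Coalgebra.comul (R := k) y))) := by
        have := ttt_nat_apply (k := k) (Coalgebra.counit (R := k) (A := M)) LinearMap.id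
          (Coalgebra.counit (R := k) (A := N)) LinearMap.id
          ((Coalgebra.comul (R := k) x) ⊗ₜ[k] (Coalgebra.comul (R := k) y))
        simpa [TensorProduct.map_id, LinearMap.rTensor] using this
      rw [e1, Coalgebra.rTensor_counit_comul, Coalgebra.rTensor_counit_comul]
      simp [tensorTensorTensorComm_tmul]
    lTensor_counit_comp_comul := by
      apply TensorProduct.ext'
      intro x y
      simp only [LinearMap.comp_apply]
      have hDxy : (CoalgebraStruct.comul (R := k) (x ⊗ₜ[k] y)) =
          (tensorTensorTensorComm k M M N N)
            ((Coalgebra.comul (R := k) x) ⊗ₜ[k] (Coalgebra.comul (R := k) y)) := rfl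
      have hsplit : ∀ (z : (M ⊗[k] N) ⊗[k] (M ⊗[k] N)),
          LinearMap.lTensor (M ⊗[k] N) (CoalgebraStruct.counit (R := k) (A := M ⊗[k] N)) z
          = TensorProduct.map LinearMap.id (LinearMap.mul' k k)
              (TensorProduct.map LinearMap.id
                (TensorProduct.map Coalgebra.counit Coalgebra.counit) z) := by
        intro z
        have : LinearMap.lTensor (M ⊗[k] N) (CoalgebraStruct.counit (R := k) (A := M ⊗[k] N))
            = TensorProduct.map LinearMap.id (LinearMap.mul' k k) ∘ₗ
              TensorProduct.map LinearMap.id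
                (TensorProduct.map Coalgebra.counit Coalgebra.counit) := by
          rw [← TensorProduct.map_comp, LinearMap.id_comp]
          congr 1
          apply TensorProduct.ext'
          intro a b
          simp [mul_comm]
        rw [this]; rfl
      rw [hDxy, hsplit]
      have e1 : TensorProduct.map LinearMap.id
            (TensorProduct.map Coalgebra.counit Coalgebra.counit)
            ((tensorTensorTensorComm k M M N N)
              ((Coalgebra.comul (R := k) x) ⊗ₜ[k] (Coalgebra.comul (R := k) y)))
          = (tensorTensorTensorComm k M k N k)
              ((LinearMap.lTensor M (Coalgebra.counit (R := k) (A := M))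
                  (Coalgebra.comul (R := k) x)) ⊗ₜ[k]
               (LinearMap.lTensor N (Coalgebra.counit (R := k) (A := N))
                  (Coalgebra.comul (R := k) y))) := by
        have := ttt_nat_apply (k := k) (LinearMap.id : M →ₗ[k] M)
          (Coalgebra.counit (R := k) (A := M)) (LinearMap.id : N →ₗ[k] N)
          (Coalgebra.counit (R := k) (A := N))
          ((Coalgebra.comul (R := k) x) ⊗ₜ[k] (Coalgebra.comul (R := k) y))
        simpa [TensorProduct.map_id, LinearMap.lTensor] using this
      rw [e1, Coalgebra.lTensor_counit_comul, Coalgebra.lTensor_counit_comul]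
      simp [tensorTensorTensorComm_tmul] }

end TensorCoalg

noncomputable section MoreConv

variable {k : Type*} [CommSemiring k]
variable {C : Type*} [AddCommMonoid C] [Module k C] [Coalgebra k C]
variable {B : Type*} [Semiring B] [Algebra k B]

lemma conv_mid (f₁ f₂ f₃ f₄ : C →ₗ[k] B) :
    conv (conv f₁ f₂) (conv f₃ f₄) = conv (conv f₁ (conv f₂ f₃)) f₄ := by
  rw [conv_assoc f₁ f₂, ← conv_assoc f₂ f₃ f₄, ← conv_assoc f₁]

lemma conv_conv_eval (f g h : C →ₗ[k] B) (c : C) :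
    conv (conv f g) h c =
      LinearMap.mul' k B
        (TensorProduct.map (LinearMap.mul' k B ∘ₗ TensorProduct.map f g) h
          ((TensorProduct.map (Coalgebra.comul (R := k)) LinearMap.id)
            (Coalgebra.comul (R := k) c))) := by
  have hsplit : TensorProduct.map (conv f g) h =
      (TensorProduct.map (LinearMap.mul' k B ∘ₗ TensorProduct.map f g) h) ∘ₗ
        (TensorProduct.map (Coalgebra.comul (R := k)) LinearMap.id) := by
    rw [← TensorProduct.map_comp, LinearMap.comp_id]
    rfl
  show LinearMap.mul' k B (TensorProduct.map (conv f g) h (Coalgebra.comul (R := k) c)) = _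
  rw [hsplit]
  rfl

section split
variable {D : Type*} [Semiring D] [Algebra k D]

lemma conv_incl_left_right (f g : C →ₗ[k] D) :
    conv ((Algebra.TensorProduct.includeLeft : D →ₐ[k] D ⊗[k] D).toLinearMap ∘ₗ f)
      ((Algebra.TensorProduct.includeRight : D →ₐ[k] D ⊗[k] D).toLinearMap ∘ₗ g)
    = TensorProduct.map f g ∘ₗ Coalgebra.comul := by
  unfold conv
  rw [TensorProduct.map_comp]
  simp only [← LinearMap.comp_assoc]
  rw [mul'_comp_includeLR, LinearMap.id_comp]

lemma conv_incl_right_left (f g : C →ₗ[k] D) :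
    conv ((Algebra.TensorProduct.includeRight : D →ₐ[k] D ⊗[k] D).toLinearMap ∘ₗ f)
      ((Algebra.TensorProduct.includeLeft : D →ₐ[k] D ⊗[k] D).toLinearMap ∘ₗ g)
    = (TensorProduct.comm k D D).toLinearMap ∘ₗ TensorProduct.map f g ∘ₗ Coalgebra.comul := by
  unfold conv
  rw [TensorProduct.map_comp]
  simp only [← LinearMap.comp_assoc]
  rw [mul'_comp_includeRL]

end split
end MoreConv

end AuxHopfDev

noncomputable section

universe v

/-- A submodule `S` of a coalgebra `C` is a subcoalgebra if `Δ(S) ⊆ S ⊗ S`. -/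
def IsSubcoalg (k : Type*) [Field k] {C : Type*} [AddCommGroup C] [Module k C] [Coalgebra k C]
    (S : Submodule k C) : Prop :=
  ∀ x ∈ S, Coalgebra.comul (R := k) x ∈
    LinearMap.range (TensorProduct.map S.subtype S.subtype)

/-- A coalgebra is pointed if every simple subcoalgebra is one-dimensional. -/
def IsPointedCoalg (k C : Type*) [Field k] [AddCommGroup C] [Module k C] [Coalgebra k C] : Prop :=
  ∀ S : Submodule k C, IsSubcoalg k S → S ≠ ⊥ →
    (∀ T : Submodule k C, IsSubcoalg k T → T < S → T = ⊥) →
    Module.finrank k S = 1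

/-- A group-like element: `ε(g) = 1` and `Δ(g) = g ⊗ g`. -/
def IsGpLike (k : Type*) [Field k] {C : Type*} [AddCommGroup C] [Module k C] [Coalgebra k C]
    (g : C) : Prop :=
  Coalgebra.counit (R := k) g = 1 ∧ Coalgebra.comul (R := k) g = g ⊗ₜ[k] g

/-- Data exhibiting `A` as the free commutative Hopf algebra `S(t_C)_Θ` on a coalgebra `C`. -/
structure FreeCommHopfData (k : Type*) [Field k] (C : Type*) [AddCommGroup C] [Module k C]
    [Coalgebra k C] (A : Type*) [CommRing A] [HopfAlgebra k A] where
  t : C →ₗ[k] A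
  tinv : C →ₗ[k] A
  comul_t : ∀ x : C, Coalgebra.comul (R := k) (t x) = TensorProduct.map t t (Coalgebra.comul x)
  comul_tinv : ∀ x : C, Coalgebra.comul (R := k) (tinv x)
      = TensorProduct.map tinv tinv (TensorProduct.comm k C C (Coalgebra.comul (R := k) x))
  counit_t : ∀ x : C, Coalgebra.counit (R := k) (t x) = Coalgebra.counit (R := k) x
  counit_tinv : ∀ x : C, Coalgebra.counit (R := k) (tinv x) = Coalgebra.counit (R := k) x
  mul_t_tinv : ∀ x : C, LinearMap.mul' k A (TensorProduct.map t tinv (Coalgebra.comul (R := k) x))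
      = Coalgebra.counit (R := k) x • (1 : A)
  mul_tinv_t : ∀ x : C, LinearMap.mul' k A (TensorProduct.map tinv t (Coalgebra.comul (R := k) x))
      = Coalgebra.counit (R := k) x • (1 : A)
  antipode_t : ∀ x : C, HopfAlgebra.antipode (R := k) (t x) = tinv x
  antipode_tinv : ∀ x : C, HopfAlgebra.antipode (R := k) (tinv x) = t x
  injective_t : Function.Injective t
  isDomain : IsDomain A
  adjoin_eq_top : Algebra.adjoin k (Set.range t ∪ Set.range tinv) = ⊤
  universal : ∀ {A' : Type v} [CommRing A'] [HopfAlgebra k A'] (f : C →ₗ[k] A'),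
      (∀ x : C, Coalgebra.comul (R := k) (f x) = TensorProduct.map f f (Coalgebra.comul (R := k) x)) →
      (∀ x : C, Coalgebra.counit (R := k) (f x) = Coalgebra.counit (R := k) x) →
      ∃! φ : A →ₐc[k] A', ∀ x : C, φ (t x) = f x

/-- Data exhibiting `Hab` as the largest commutative Hopf algebra quotient of `H`. -/
structure HabData (k : Type*) [Field k] (H : Type*) [Ring H] [HopfAlgebra k H]
    (Hab : Type*) [CommRing Hab] [HopfAlgebra k Hab] where
  q : H →ₐc[k] Hab
  surjective_q : Function.Surjective q
  universal : ∀ {B : Type v} [CommRing B] [HopfAlgebra k B] (f : H →ₐc[k] B),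
      ∃! g : Hab →ₐc[k] B, ∀ x : H, g (q x) = f x

variable {k : Type*} [Field k]

section Generic

variable {H : Type*} [Ring H] [HopfAlgebra k H] {A : Type*} [CommRing A] [HopfAlgebra k A]

/-- σ(x,y) = t_{x₁} t_{y₁} t⁻¹_{x₂ y₂}. -/
def sigmaElem (F : FreeCommHopfData k H A) (x y : H) : A :=
  (LinearMap.mul' k A).comp
    ((TensorProduct.map (LinearMap.mul' k A) LinearMap.id).comp
      ((TensorProduct.map (TensorProduct.map F.t F.t) (F.tinv.comp (LinearMap.mul' k H))).comp
        (TensorProduct.tensorTensorTensorComm k H H H H).toLinearMap))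
    ((Coalgebra.comul (R := k) x) ⊗ₜ[k] (Coalgebra.comul (R := k) y))

/-- σ⁻¹(x,y) = t_{x₁ y₁} t⁻¹_{x₂} t⁻¹_{y₂}. -/
def sigmaInvElem (F : FreeCommHopfData k H A) (x y : H) : A :=
  (LinearMap.mul' k A).comp
    ((TensorProduct.map LinearMap.id (LinearMap.mul' k A)).comp
      ((TensorProduct.map (F.t.comp (LinearMap.mul' k H)) (TensorProduct.map F.tinv F.tinv)).comp
        (TensorProduct.tensorTensorTensorComm k H H H H).toLinearMap))
    ((Coalgebra.comul (R := k) x) ⊗ₜ[k] (Coalgebra.comul (R := k) y))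

/-- The generic base algebra B_H. -/
def genericBase (F : FreeCommHopfData k H A) : Subalgebra k A :=
  Algebra.adjoin k ({a | ∃ x y : H, a = sigmaElem F x y} ∪ {a | ∃ x y : H, a = sigmaInvElem F x y})

/-- The coaction δ_S = (id ⊗ q̃) ∘ Δ of H_ab on S(t_H)_Θ, as an algebra map. -/
def coactS {Hab : Type*} [CommRing Hab] [HopfAlgebra k Hab] (qt : A →ₐc[k] Hab) :
    A →ₐ[k] A ⊗[k] Hab :=
  (Algebra.TensorProduct.map (AlgHom.id k A) (qt : A →ₐ[k] Hab)).comp (Bialgebra.comulAlgHom k A)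

/-- The subalgebra C_H of right H_ab-coinvariants of S(t_H)_Θ. -/
def coinvCH {Hab : Type*} [CommRing Hab] [HopfAlgebra k Hab] (qt : A →ₐc[k] Hab) :
    Subalgebra k A :=
  AlgHom.equalizer (coactS qt) Algebra.TensorProduct.includeLeft

end Generic

/-- `B` is a localization of `A` (inside an ambient commutative ring `R`): `A ⊆ B`, and `B` is
obtained from `A` by inverting a multiplicative subset of `A`. -/
def IsLocalizationOfSet {R : Type*} [CommRing R] (A B : Set R) : Prop :=
  A ⊆ B ∧ ∃ M : Submonoid R, (M : Set R) ⊆ A ∧ (∀ m ∈ M, ∃ b ∈ B, m * b = 1) ∧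
    ∀ b ∈ B, ∃ m ∈ M, b * m ∈ A


section PI

variable {H : Type*} [Ring H] [HopfAlgebra k H] {A : Type*} [CommRing A] [HopfAlgebra k A]

/-- The coaction δ_T of H on the tensor algebra T(X_H), with δ_T(X_x) = X_{x₁} ⊗ x₂. -/
def coactT (k : Type*) [Field k] (H : Type*) [Ring H] [HopfAlgebra k H] :
    TensorAlgebra k H →ₐ[k] TensorAlgebra k H ⊗[k] H :=
  TensorAlgebra.lift k
    ((TensorProduct.map (TensorAlgebra.ι k) LinearMap.id).comp
      (Coalgebra.comul (R := k) (A := H)))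

/-- The universal comodule algebra map μ : T(X_H) → S(t_H) ⊗ H, μ(X_x) = t_{x₁} ⊗ x₂. -/
def muMap (F : FreeCommHopfData k H A) : TensorAlgebra k H →ₐ[k] A ⊗[k] H :=
  TensorAlgebra.lift k
    ((TensorProduct.map F.t LinearMap.id).comp (Coalgebra.comul (R := k) (A := H)))

/-- p_x = t_{x₁} t_{S(x₂)}, as a linear function of x. -/
def pMap (F : FreeCommHopfData k H A) : H →ₗ[k] A :=
  (LinearMap.mul' k A).comp
    ((TensorProduct.map F.t (F.t.comp (HopfAlgebra.antipode (R := k)))).comp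
      (Coalgebra.comul (R := k)))

/-- q_{x,y} = t_{x₁} t_{y₁} t_{S(x₂ y₂)}, as a linear function of x ⊗ y. -/
def qMap (F : FreeCommHopfData k H A) : H ⊗[k] H →ₗ[k] A :=
  ((LinearMap.mul' k A).comp
    ((TensorProduct.map (LinearMap.mul' k A) LinearMap.id).comp
      ((TensorProduct.map (TensorProduct.map F.t F.t)
          ((F.t.comp ((HopfAlgebra.antipode (R := k)).comp (LinearMap.mul' k H))))).comp
        (TensorProduct.tensorTensorTensorComm k H H H H).toLinearMap))).comp
    (TensorProduct.map (Coalgebra.comul (R := k)) (Coalgebra.comul (R := k)))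

/-- P_x = X_{x₁} X_{S(x₂)} in the tensor algebra. -/
def PElem (k : Type*) [Field k] {H : Type*} [Ring H] [HopfAlgebra k H] (x : H) :
    TensorAlgebra k H :=
  (LinearMap.mul' k (TensorAlgebra k H))
    ((TensorProduct.map (TensorAlgebra.ι k)
      ((TensorAlgebra.ι k).comp (HopfAlgebra.antipode (R := k)))) (Coalgebra.comul (R := k) x))

/-- Q_{x,y} = X_{x₁} X_{y₁} X_{S(x₂ y₂)} in the tensor algebra. -/
def QElem (k : Type*) [Field k] {H : Type*} [Ring H] [HopfAlgebra k H] (x y : H) :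
    TensorAlgebra k H :=
  (LinearMap.mul' k (TensorAlgebra k H))
    ((TensorProduct.map (LinearMap.mul' k (TensorAlgebra k H)) LinearMap.id)
      ((TensorProduct.map (TensorProduct.map (TensorAlgebra.ι k) (TensorAlgebra.ι k))
          ((TensorAlgebra.ι k).comp ((HopfAlgebra.antipode (R := k)).comp (LinearMap.mul' k H))))
        ((TensorProduct.tensorTensorTensorComm k H H H H)
          ((Coalgebra.comul (R := k) x) ⊗ₜ[k] (Coalgebra.comul (R := k) y)))))

/-- μ̄(V_H): the image in S(t_H) ⊆ A of the coinvariants of the universal comodule algebra. -/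
def VHSet (F : FreeCommHopfData k H A) : Set A :=
  {a : A | ∃ u : TensorAlgebra k H, muMap F u = a ⊗ₜ[k] 1}

/-- `a` is a monomial of degree ≤ m (and ≥ 1) in the t-variables. -/
def IsTMonomialLe (F : FreeCommHopfData k H A) (m : ℕ) (a : A) : Prop :=
  ∃ d : ℕ, 1 ≤ d ∧ d ≤ m ∧ ∃ f : Fin d → H, a = ∏ j, F.t (f j)

/-- `a` is a monomial of degree ≤ m in the variables t_g, g group-like. -/
def IsTGpMonomialLe (F : FreeCommHopfData k H A) (m : ℕ) (a : A) : Prop :=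
  ∃ d : ℕ, 1 ≤ d ∧ d ≤ m ∧ ∃ f : Fin d → H, (∀ j, IsGpLike k (f j)) ∧ a = ∏ j, F.t (f j)

end PI

/-- Data exhibiting `H` as the Hopf algebra O_k(G) of k-valued functions on a finite group `G`. -/
structure FunAlgData (k : Type*) [Field k] (G : Type*) [Group G] [Fintype G] [DecidableEq G]
    (H : Type*) [CommRing H] [HopfAlgebra k H] where
  e : Module.Basis G k H
  mul_e : ∀ g h : G, e g * e h = if g = h then e g else 0
  sum_e : ∑ g : G, e g = 1
  comul_e : ∀ g : G, Coalgebra.comul (R := k) (e g) = ∑ h : G, e (g * h⁻¹) ⊗ₜ[k] e h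
  counit_e : ∀ g : G, Coalgebra.counit (R := k) (e g) = if g = 1 then (1 : k) else 0
  antipode_e : ∀ g : G, HopfAlgebra.antipode (R := k) (e g) = e g⁻¹


noncomputable section AuxMainLemmas

noncomputable section MainLemmas

variable {H : Type*} [Ring H] [HopfAlgebra k H]
  {A : Type*} [CommRing A] [HopfAlgebra k A]

/-- t ∘ S. -/
def tsMap (F : FreeCommHopfData k H A) : H →ₗ[k] A :=
  F.t ∘ₗ HopfAlgebra.antipode (R := k)

/-- u(x ⊗ y) = t_x t_y. -/
def uMap (F : FreeCommHopfData k H A) : H ⊗[k] H →ₗ[k] A :=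
  LinearMap.mul' k A ∘ₗ TensorProduct.map F.t F.t

/-- v(x ⊗ y) = t_{S(xy)}. -/
def vMap (F : FreeCommHopfData k H A) : H ⊗[k] H →ₗ[k] A :=
  F.t ∘ₗ HopfAlgebra.antipode (R := k) ∘ₗ LinearMap.mul' k H

/-- The evaluation map for `Δ ∘ pMap`. -/
def pAux (F : FreeCommHopfData k H A) : (H ⊗[k] H) ⊗[k] H →ₗ[k] A ⊗[k] A :=
  LinearMap.mul' k (A ⊗[k] A) ∘ₗ
    TensorProduct.map
      (LinearMap.mul' k (A ⊗[k] A) ∘ₗ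
        TensorProduct.map
          ((Algebra.TensorProduct.includeLeft : A →ₐ[k] A ⊗[k] A).toLinearMap ∘ₗ F.t)
          ((Algebra.TensorProduct.includeRight : A →ₐ[k] A ⊗[k] A).toLinearMap ∘ₗ pMap F))
      ((Algebra.TensorProduct.includeLeft : A →ₐ[k] A ⊗[k] A).toLinearMap ∘ₗ tsMap F)

/-- The evaluation map for `Δ ∘ qMap`. -/
def qAux (F : FreeCommHopfData k H A) :
    ((H ⊗[k] H) ⊗[k] (H ⊗[k] H)) ⊗[k] (H ⊗[k] H) →ₗ[k] A ⊗[k] A :=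
  LinearMap.mul' k (A ⊗[k] A) ∘ₗ
    TensorProduct.map
      (LinearMap.mul' k (A ⊗[k] A) ∘ₗ
        TensorProduct.map
          ((Algebra.TensorProduct.includeLeft : A →ₐ[k] A ⊗[k] A).toLinearMap ∘ₗ uMap F)
          ((Algebra.TensorProduct.includeRight : A →ₐ[k] A ⊗[k] A).toLinearMap ∘ₗ qMap F))
      ((Algebra.TensorProduct.includeLeft : A →ₐ[k] A ⊗[k] A).toLinearMap ∘ₗ vMap F)

variable (F : FreeCommHopfData k H A)

lemma pMap_eq_conv : pMap F = conv F.t (tsMap F) := rfl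

lemma comm_nat {M N M' N' : Type*} [AddCommMonoid M] [AddCommMonoid N] [AddCommMonoid M']
    [AddCommMonoid N'] [Module k M] [Module k N] [Module k M'] [Module k N']
    (f : M →ₗ[k] M') (g : N →ₗ[k] N') :
    TensorProduct.map g f ∘ₗ (TensorProduct.comm k M N).toLinearMap
    = (TensorProduct.comm k M' N').toLinearMap ∘ₗ TensorProduct.map f g := by
  ext a b
  simp

lemma comul_comp_t :
    (Coalgebra.comul (R := k) (A := A)) ∘ₗ F.t = TensorProduct.map F.t F.t ∘ₗ Coalgebra.comul :=
  LinearMap.ext F.comul_t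

lemma comul_comp_ts :
    (Coalgebra.comul (R := k) (A := A)) ∘ₗ tsMap F =
      (TensorProduct.comm k A A).toLinearMap ∘ₗ TensorProduct.map (tsMap F) (tsMap F) ∘ₗ
        Coalgebra.comul := by
  ext x
  simp only [LinearMap.comp_apply, LinearEquiv.coe_coe]
  show Coalgebra.comul (R := k) (F.t (HopfAlgebra.antipode (R := k) x)) = _
  rw [F.comul_t, comul_antipode_apply (k := k) x]
  have h1 := congrFun (congrArg DFunLike.coe (comm_nat (k := k) F.t F.t))
    (TensorProduct.map (HopfAlgebra.antipode (R := k)) (HopfAlgebra.antipode (R := k))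
      (Coalgebra.comul (R := k) x))
  simp only [LinearMap.comp_apply, LinearEquiv.coe_coe] at h1
  rw [h1]
  congr 1
  rw [← LinearMap.comp_apply, ← TensorProduct.map_comp]
  rfl

lemma comul_comp_pMap :
    (Coalgebra.comul (R := k) (A := A)) ∘ₗ pMap F =
      conv (conv ((Algebra.TensorProduct.includeLeft : A →ₐ[k] A ⊗[k] A).toLinearMap ∘ₗ F.t)
        ((Algebra.TensorProduct.includeRight : A →ₐ[k] A ⊗[k] A).toLinearMap ∘ₗ pMap F))
        ((Algebra.TensorProduct.includeLeft : A →ₐ[k] A ⊗[k] A).toLinearMap ∘ₗ tsMap F) := by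
  have hφ : (Bialgebra.comulAlgHom k A).toLinearMap = (Coalgebra.comul : A →ₗ[k] A ⊗[k] A) := rfl
  have h0 : (Coalgebra.comul (R := k) (A := A)) ∘ₗ pMap F =
      conv ((Coalgebra.comul : A →ₗ[k] A ⊗[k] A) ∘ₗ F.t)
        ((Coalgebra.comul : A →ₗ[k] A ⊗[k] A) ∘ₗ tsMap F) := by
    rw [pMap_eq_conv]
    have := algHom_comp_conv (Bialgebra.comulAlgHom k A) F.t (tsMap F)
    rw [hφ] at this
    exact this
  rw [h0, comul_comp_t, ← conv_incl_left_right, comul_comp_ts, ← conv_incl_right_left,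
    conv_mid]
  congr 1
  congr 1
  rw [pMap_eq_conv]
  have := algHom_comp_conv (Algebra.TensorProduct.includeRight : A →ₐ[k] A ⊗[k] A)
    F.t (tsMap F)
  exact this.symm

lemma comul_pMap_eq (x : H) :
    Coalgebra.comul (R := k) (pMap F x) =
      pAux F ((TensorProduct.map (Coalgebra.comul (R := k)) LinearMap.id)
        (Coalgebra.comul (R := k) x)) := by
  have := congrFun (congrArg DFunLike.coe (comul_comp_pMap F)) x
  rw [LinearMap.comp_apply] at this
  rw [this, conv_conv_eval]
  rfl

lemma qMap_eq_conv : qMap F = conv (uMap F) (vMap F) := by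
  have hm : TensorProduct.map (LinearMap.mul' k A ∘ₗ TensorProduct.map F.t F.t)
        (F.t ∘ₗ HopfAlgebra.antipode (R := k) ∘ₗ LinearMap.mul' k H)
      = TensorProduct.map (LinearMap.mul' k A) LinearMap.id ∘ₗ
        TensorProduct.map (TensorProduct.map F.t F.t)
          (F.t ∘ₗ HopfAlgebra.antipode (R := k) ∘ₗ LinearMap.mul' k H) := by
    rw [← TensorProduct.map_comp, LinearMap.id_comp]
  unfold qMap conv uMap vMap
  rw [hm]
  simp only [LinearMap.comp_assoc]
  rfl

lemma mulsplit1 :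
    LinearMap.mul' k (A ⊗[k] A) ∘ₗ
      TensorProduct.map (TensorProduct.map F.t F.t) (TensorProduct.map F.t F.t)
    = TensorProduct.map (uMap F) (uMap F) ∘ₗ
      (tensorTensorTensorComm k H H H H).toLinearMap := by
  ext a b c d
  simp [uMap, Algebra.TensorProduct.tmul_mul_tmul]

lemma comul_comp_u :
    (Coalgebra.comul (R := k) (A := A)) ∘ₗ uMap F
    = TensorProduct.map (uMap F) (uMap F) ∘ₗ Coalgebra.comul := by
  apply TensorProduct.ext'
  intro x y
  simp only [LinearMap.comp_apply]
  have hu : uMap F (x ⊗ₜ[k] y) = F.t x * F.t y := by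
    simp [uMap]
  rw [hu, Bialgebra.comul_mul, F.comul_t, F.comul_t]
  have hD : (Coalgebra.comul (R := k) (x ⊗ₜ[k] y) : (H ⊗[k] H) ⊗[k] (H ⊗[k] H)) =
      (tensorTensorTensorComm k H H H H)
        ((Coalgebra.comul (R := k) x) ⊗ₜ[k] (Coalgebra.comul (R := k) y)) := rfl
  rw [hD]
  have h1 := congrFun (congrArg DFunLike.coe (mulsplit1 F))
    ((Coalgebra.comul (R := k) x) ⊗ₜ[k] (Coalgebra.comul (R := k) y))
  simp only [LinearMap.comp_apply, LinearEquiv.coe_coe, TensorProduct.map_tmul,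
    LinearMap.mul'_apply] at h1
  exact h1

lemma mulsplit2 :
    TensorProduct.map F.t F.t ∘ₗ (TensorProduct.comm k H H).toLinearMap ∘ₗ
      TensorProduct.map (HopfAlgebra.antipode (R := k)) (HopfAlgebra.antipode (R := k)) ∘ₗ
      LinearMap.mul' k (H ⊗[k] H)
    = (TensorProduct.comm k A A).toLinearMap ∘ₗ TensorProduct.map (vMap F) (vMap F) ∘ₗ
      (tensorTensorTensorComm k H H H H).toLinearMap := by
  ext a b c d
  simp [vMap, Algebra.TensorProduct.tmul_mul_tmul]

lemma comul_comp_v :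
    (Coalgebra.comul (R := k) (A := A)) ∘ₗ vMap F
    = (TensorProduct.comm k A A).toLinearMap ∘ₗ TensorProduct.map (vMap F) (vMap F) ∘ₗ
      Coalgebra.comul := by
  apply TensorProduct.ext'
  intro x y
  simp only [LinearMap.comp_apply, LinearEquiv.coe_coe]
  have hv : vMap F (x ⊗ₜ[k] y) = F.t (HopfAlgebra.antipode (R := k) (x * y)) := by
    simp [vMap]
  rw [hv, F.comul_t, comul_antipode_apply (k := k) (x * y), Bialgebra.comul_mul]
  have hD : (Coalgebra.comul (R := k) (x ⊗ₜ[k] y) : (H ⊗[k] H) ⊗[k] (H ⊗[k] H)) =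
      (tensorTensorTensorComm k H H H H)
        ((Coalgebra.comul (R := k) x) ⊗ₜ[k] (Coalgebra.comul (R := k) y)) := rfl
  rw [hD]
  have h1 := congrFun (congrArg DFunLike.coe (mulsplit2 F))
    ((Coalgebra.comul (R := k) x) ⊗ₜ[k] (Coalgebra.comul (R := k) y))
  simp only [LinearMap.comp_apply, LinearEquiv.coe_coe, TensorProduct.map_tmul,
    LinearMap.mul'_apply] at h1
  exact h1

lemma comul_comp_qMap :
    (Coalgebra.comul (R := k) (A := A)) ∘ₗ qMap F =
      conv (conv ((Algebra.TensorProduct.includeLeft : A →ₐ[k] A ⊗[k] A).toLinearMap ∘ₗ uMap F)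
        ((Algebra.TensorProduct.includeRight : A →ₐ[k] A ⊗[k] A).toLinearMap ∘ₗ qMap F))
        ((Algebra.TensorProduct.includeLeft : A →ₐ[k] A ⊗[k] A).toLinearMap ∘ₗ vMap F) := by
  have hφ : (Bialgebra.comulAlgHom k A).toLinearMap = (Coalgebra.comul : A →ₗ[k] A ⊗[k] A) := rfl
  have h0 : (Coalgebra.comul (R := k) (A := A)) ∘ₗ qMap F =
      conv ((Coalgebra.comul : A →ₗ[k] A ⊗[k] A) ∘ₗ uMap F)
        ((Coalgebra.comul : A →ₗ[k] A ⊗[k] A) ∘ₗ vMap F) := by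
    rw [qMap_eq_conv]
    have := algHom_comp_conv (Bialgebra.comulAlgHom k A) (uMap F) (vMap F)
    rw [hφ] at this
    exact this
  rw [h0, comul_comp_u, ← conv_incl_left_right, comul_comp_v, ← conv_incl_right_left,
    conv_mid]
  congr 1
  congr 1
  rw [qMap_eq_conv]
  exact (algHom_comp_conv (Algebra.TensorProduct.includeRight : A →ₐ[k] A ⊗[k] A)
    (uMap F) (vMap F)).symm

lemma comul_qMap_eq (c : H ⊗[k] H) :
    Coalgebra.comul (R := k) (qMap F c) =
      qAux F ((TensorProduct.map (Coalgebra.comul (R := k)) LinearMap.id)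
        (Coalgebra.comul (R := k) c)) := by
  have := congrFun (congrArg DFunLike.coe (comul_comp_qMap F)) c
  rw [LinearMap.comp_apply] at this
  rw [this, conv_conv_eval]
  rfl

lemma shuffle (x y : H) :
    (TensorProduct.map (Coalgebra.comul (R := k)) LinearMap.id)
        (Coalgebra.comul (R := k) (x ⊗ₜ[k] y))
    = TensorProduct.map (tensorTensorTensorComm k H H H H).toLinearMap LinearMap.id
        ((tensorTensorTensorComm k (H ⊗[k] H) H (H ⊗[k] H) H)
          (((TensorProduct.map (Coalgebra.comul (R := k)) LinearMap.id)
              (Coalgebra.comul (R := k) x)) ⊗ₜ[k]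
           ((TensorProduct.map (Coalgebra.comul (R := k)) LinearMap.id)
              (Coalgebra.comul (R := k) y)))) := by
  have hD : (Coalgebra.comul (R := k) (x ⊗ₜ[k] y) : (H ⊗[k] H) ⊗[k] (H ⊗[k] H)) =
      (tensorTensorTensorComm k H H H H)
        ((Coalgebra.comul (R := k) x) ⊗ₜ[k] (Coalgebra.comul (R := k) y)) := rfl
  rw [hD]
  have hsplit : TensorProduct.map (Coalgebra.comul (R := k) (A := H ⊗[k] H))
        (LinearMap.id : H ⊗[k] H →ₗ[k] H ⊗[k] H)
      = TensorProduct.map (tensorTensorTensorComm k H H H H).toLinearMap LinearMap.id ∘ₗ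
        TensorProduct.map (TensorProduct.map Coalgebra.comul Coalgebra.comul) LinearMap.id := by
    rw [← TensorProduct.map_comp, LinearMap.id_comp]
    rfl
  rw [hsplit, LinearMap.comp_apply]
  congr 1
  have := ttt_nat_apply (k := k) (Coalgebra.comul (R := k) (A := H)) (LinearMap.id : H →ₗ[k] H)
    (Coalgebra.comul (R := k) (A := H)) (LinearMap.id : H →ₗ[k] H)
    ((Coalgebra.comul (R := k) x) ⊗ₜ[k] (Coalgebra.comul (R := k) y))
  simpa [TensorProduct.map_id] using this

end MainLemmas

end AuxMainLemmas

set_option synthInstance.maxHeartbeats 1000000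
set_option maxHeartbeats 2000000

/-- The subalgebra `W_H` of `S(t_H)_Θ` generated by the elements `p_x` and
`q_{x,y}` is a left coideal subalgebra, `Δ(W_H) ⊆ S(t_H)_Θ ⊗ W_H`; explicitly, for any Sweedler
representation `Δ²(x) = ∑ᵢ aᵢ ⊗ bᵢ ⊗ cᵢ` one has
`Δ(p_x) = ∑ᵢ t_{aᵢ} t_{S(cᵢ)} ⊗ p_{bᵢ}`, and similarly
`Δ(q_{x,y}) = ∑ᵢⱼ t_{aᵢ} t_{a'ⱼ} t_{S(cᵢ c'ⱼ)} ⊗ q_{bᵢ, b'ⱼ}`. -/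
theorem stmt_15 (k : Type*) [Field k] (H : Type*) [Ring H] [HopfAlgebra k H]
    (A : Type*) [CommRing A] [HopfAlgebra k A] (F : FreeCommHopfData k H A) :
    (∀ a ∈ Algebra.adjoin k
        ({a | ∃ x : H, a = pMap F x} ∪ {a | ∃ x y : H, a = qMap F (x ⊗ₜ[k] y)}),
      Coalgebra.comul (R := k) a ∈
        LinearMap.range (TensorProduct.map (LinearMap.id : A →ₗ[k] A)
          (Subalgebra.toSubmodule (Algebra.adjoin k
            ({a | ∃ x : H, a = pMap F x} ∪
              {a | ∃ x y : H, a = qMap F (x ⊗ₜ[k] y)}))).subtype)) ∧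
    (∀ (x : H) (ι : Type) (s : Finset ι) (a b c : ι → H),
      (TensorProduct.map (Coalgebra.comul (R := k)) LinearMap.id)
          (Coalgebra.comul (R := k) x) = ∑ i ∈ s, (a i ⊗ₜ[k] b i) ⊗ₜ[k] c i →
      Coalgebra.comul (R := k) (pMap F x) =
        ∑ i ∈ s, (F.t (a i) * F.t (HopfAlgebra.antipode (R := k) (c i))) ⊗ₜ[k] pMap F (b i)) ∧
    (∀ (x y : H) (ι κ : Type) (s : Finset ι) (s' : Finset κ)
        (a b c : ι → H) (a' b' c' : κ → H),
      (TensorProduct.map (Coalgebra.comul (R := k)) LinearMap.id)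
          (Coalgebra.comul (R := k) x) = ∑ i ∈ s, (a i ⊗ₜ[k] b i) ⊗ₜ[k] c i →
      (TensorProduct.map (Coalgebra.comul (R := k)) LinearMap.id)
          (Coalgebra.comul (R := k) y) = ∑ j ∈ s', (a' j ⊗ₜ[k] b' j) ⊗ₜ[k] c' j →
      Coalgebra.comul (R := k) (qMap F (x ⊗ₜ[k] y)) =
        ∑ i ∈ s, ∑ j ∈ s',
          (F.t (a i) * F.t (a' j) *
            F.t (HopfAlgebra.antipode (R := k) (c i * c' j))) ⊗ₜ[k]
          qMap F (b i ⊗ₜ[k] b' j)) := by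
  set W := Algebra.adjoin k
    ({a | ∃ x : H, a = pMap F x} ∪ {a | ∃ x y : H, a = qMap F (x ⊗ₜ[k] y)}) with hWdef
  set R := LinearMap.range (TensorProduct.map (LinearMap.id : A →ₗ[k] A)
    (Subalgebra.toSubmodule W).subtype) with hRdef
  have hmemR : ∀ (u w : A), w ∈ W → u ⊗ₜ[k] w ∈ R := by
    intro u w hw
    exact ⟨u ⊗ₜ[k] (⟨w, hw⟩ : (Subalgebra.toSubmodule W)), by simp⟩
  have hmul : ∀ u v : A ⊗[k] A, u ∈ R → v ∈ R → u * v ∈ R := by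
    rintro _ _ ⟨p, rfl⟩ ⟨q, rfl⟩
    induction p using TensorProduct.induction_on with
    | zero => simp only [map_zero, zero_mul]; exact Submodule.zero_mem _
    | tmul a' w =>
      induction q using TensorProduct.induction_on with
      | zero => simp only [map_zero, mul_zero]; exact Submodule.zero_mem _
      | tmul b' w' =>
        simp only [TensorProduct.map_tmul, LinearMap.id_coe, id_eq, Submodule.subtype_apply,
          Algebra.TensorProduct.tmul_mul_tmul]
        exact hmemR _ _ (mul_mem w.2 w'.2)
      | add q₁ q₂ h₁ h₂ => simp only [map_add, mul_add]; exact Submodule.add_mem _ h₁ h₂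
    | add p₁ p₂ h₁ h₂ => simp only [map_add, add_mul]; exact Submodule.add_mem _ h₁ h₂
  have hpW : ∀ z : H, pMap F z ∈ W := fun z => Algebra.subset_adjoin (Or.inl ⟨z, rfl⟩)
  have hqW : ∀ c : H ⊗[k] H, qMap F c ∈ W := by
    intro c
    induction c using TensorProduct.induction_on with
    | zero => simp only [map_zero]; exact zero_mem W
    | tmul x y => exact Algebra.subset_adjoin (Or.inr ⟨x, y, rfl⟩)
    | add c₁ c₂ h₁ h₂ => rw [map_add]; exact add_mem h₁ h₂
  have hpAux : ∀ z : (H ⊗[k] H) ⊗[k] H, pAux F z ∈ R := by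
    have hX : ∀ P : H ⊗[k] H,
        LinearMap.mul' k (A ⊗[k] A)
          (TensorProduct.map
            ((Algebra.TensorProduct.includeLeft : A →ₐ[k] A ⊗[k] A).toLinearMap ∘ₗ F.t)
            ((Algebra.TensorProduct.includeRight : A →ₐ[k] A ⊗[k] A).toLinearMap ∘ₗ pMap F)
            P) ∈ R := by
      intro P
      induction P using TensorProduct.induction_on with
      | zero => simp only [map_zero]; exact Submodule.zero_mem _
      | tmul a' b' =>
        simp only [TensorProduct.map_tmul, LinearMap.comp_apply, LinearMap.mul'_apply,
          AlgHom.toLinearMap_apply, Algebra.TensorProduct.includeLeft_apply,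
          Algebra.TensorProduct.includeRight_apply, Algebra.TensorProduct.tmul_mul_tmul,
          one_mul, mul_one]
        exact hmemR _ _ (hpW b')
      | add P₁ P₂ h₁ h₂ => simp only [map_add]; exact Submodule.add_mem _ h₁ h₂
    intro z
    induction z using TensorProduct.induction_on with
    | zero => simp only [map_zero]; exact Submodule.zero_mem _
    | add z₁ z₂ h₁ h₂ => simp only [map_add]; exact Submodule.add_mem _ h₁ h₂
    | tmul P c =>
      have hsplit : pAux F (P ⊗ₜ[k] c) =
          (LinearMap.mul' k (A ⊗[k] A))
            (TensorProduct.map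
              ((Algebra.TensorProduct.includeLeft : A →ₐ[k] A ⊗[k] A).toLinearMap ∘ₗ F.t)
              ((Algebra.TensorProduct.includeRight : A →ₐ[k] A ⊗[k] A).toLinearMap ∘ₗ pMap F)
              P) * ((tsMap F c) ⊗ₜ[k] (1 : A)) := by
        simp [pAux]
      rw [hsplit]
      exact hmul _ _ (hX P) (hmemR _ _ (one_mem W))
  have hqAux : ∀ z : ((H ⊗[k] H) ⊗[k] (H ⊗[k] H)) ⊗[k] (H ⊗[k] H), qAux F z ∈ R := by
    have hX : ∀ P : (H ⊗[k] H) ⊗[k] (H ⊗[k] H),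
        LinearMap.mul' k (A ⊗[k] A)
          (TensorProduct.map
            ((Algebra.TensorProduct.includeLeft : A →ₐ[k] A ⊗[k] A).toLinearMap ∘ₗ uMap F)
            ((Algebra.TensorProduct.includeRight : A →ₐ[k] A ⊗[k] A).toLinearMap ∘ₗ qMap F)
            P) ∈ R := by
      intro P
      induction P using TensorProduct.induction_on with
      | zero => simp only [map_zero]; exact Submodule.zero_mem _
      | tmul a' b' =>
        simp only [TensorProduct.map_tmul, LinearMap.comp_apply, LinearMap.mul'_apply,
          AlgHom.toLinearMap_apply, Algebra.TensorProduct.includeLeft_apply,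
          Algebra.TensorProduct.includeRight_apply, Algebra.TensorProduct.tmul_mul_tmul,
          one_mul, mul_one]
        exact hmemR _ _ (hqW b')
      | add P₁ P₂ h₁ h₂ => simp only [map_add]; exact Submodule.add_mem _ h₁ h₂
    intro z
    induction z using TensorProduct.induction_on with
    | zero => simp only [map_zero]; exact Submodule.zero_mem _
    | add z₁ z₂ h₁ h₂ => simp only [map_add]; exact Submodule.add_mem _ h₁ h₂
    | tmul P c =>
      have hsplit : qAux F (P ⊗ₜ[k] c) =
          (LinearMap.mul' k (A ⊗[k] A))
            (TensorProduct.map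
              ((Algebra.TensorProduct.includeLeft : A →ₐ[k] A ⊗[k] A).toLinearMap ∘ₗ uMap F)
              ((Algebra.TensorProduct.includeRight : A →ₐ[k] A ⊗[k] A).toLinearMap ∘ₗ qMap F)
              P) * ((vMap F c) ⊗ₜ[k] (1 : A)) := by
        simp [qAux]
      rw [hsplit]
      exact hmul _ _ (hX P) (hmemR _ _ (one_mem W))
  refine ⟨?_, ?_, ?_⟩
  · intro a ha
    refine Algebra.adjoin_induction
      (p := fun y _ => Coalgebra.comul (R := k) y ∈ R) ?_ ?_ ?_ ?_ ha
    · rintro y (⟨x, rfl⟩ | ⟨x', y', rfl⟩)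
      · rw [comul_pMap_eq]; exact hpAux _
      · rw [comul_qMap_eq]; exact hqAux _
    · intro r
      rw [Bialgebra.comul_algebraMap, Algebra.TensorProduct.algebraMap_apply]
      exact hmemR _ _ (one_mem W)
    · intro p q _ _ hp hq
      rw [map_add]; exact Submodule.add_mem _ hp hq
    · intro p q _ _ hp hq
      rw [Bialgebra.comul_mul]; exact hmul _ _ hp hq
  · intro x ι s a b c hx
    rw [comul_pMap_eq, hx, map_sum]
    refine Finset.sum_congr rfl fun i _ => ?_
    simp [pAux, tsMap, Algebra.TensorProduct.tmul_mul_tmul]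
  · intro x y ι κ s s' a b c a' b' c' hx hy
    rw [comul_qMap_eq, shuffle, hx, hy]
    rw [TensorProduct.sum_tmul, map_sum, map_sum, map_sum]
    refine Finset.sum_congr rfl fun i _ => ?_
    rw [TensorProduct.tmul_sum, map_sum, map_sum, map_sum]
    refine Finset.sum_congr rfl fun j _ => ?_
    simp [qAux, uMap, vMap, Algebra.TensorProduct.tmul_mul_tmul, tensorTensorTensorComm_tmul]


end
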